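/- arXiv:1403.0259 — 2 statements merged into one kernel-verified Lean document; each statement's English description precedes it below -/
import Mathlib

section
/- Let 0 < r < 1 and 0 < p < 1. Then lim_{n→∞} (1/n)·log( C(n,⌈rn⌉)·p^{⌈rn⌉}·(1-p)^{n-⌈rn⌉} ) = -D(r‖p), where D(r‖p) = r·log(r/p) + (1-r)·log((1-r)/(1-p)) is the binary information divergence. -/
open Filter Real

set_option maxHeartbeats 1000000

noncomputable def fstir (m : ℕ) : ℝ := Real.log m.factorial - m * Real.log m + m

lemma fstir_eq {m : ℕ} (hm : 1 ≤ m) :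
    fstir m = Real.log (Stirling.stirlingSeq m) + 1 / 2 * Real.log (2 * m) := by
  have h := Stirling.log_stirlingSeq_formula m
  have hm0 : (0:ℝ) < m := by exact_mod_cast hm
  rw [Real.log_div (ne_of_gt hm0) (Real.exp_ne_zero 1), Real.log_exp] at h
  unfold fstir
  rw [h]; ring

lemma tendsto_fstir_div : Tendsto (fun m : ℕ => fstir m / m) atTop (nhds 0) := by
  have h1 : Tendsto (fun m : ℕ => Real.log (Stirling.stirlingSeq m) / m) atTop (nhds 0) := by
    have hst : Tendsto (fun m : ℕ => Real.log (Stirling.stirlingSeq m)) atTop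
        (nhds (Real.log (Real.sqrt Real.pi))) :=
      ((Real.continuousAt_log (by positivity)).tendsto).comp Stirling.tendsto_stirlingSeq_sqrt_pi
    simpa using hst.div_atTop tendsto_natCast_atTop_atTop
  have h2 : Tendsto (fun m : ℕ => 1 / 2 * Real.log (2 * m) / m) atTop (nhds 0) := by
    have hlog : Tendsto (fun x : ℝ => Real.log x / x) atTop (nhds 0) :=
      Real.isLittleO_log_id_atTop.tendsto_div_nhds_zero
    have hcomp : Tendsto (fun m : ℕ => Real.log (2 * m) / (2 * m)) atTop (nhds 0) :=
      hlog.comp (tendsto_natCast_atTop_atTop.const_mul_atTop two_pos)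
    have h3 : Tendsto (fun m : ℕ => Real.log (2 * m) / (2 * m) * 1) atTop (nhds 0) := by
      simpa using hcomp.mul (tendsto_const_nhds (x := (1:ℝ)))
    apply h3.congr'
    filter_upwards [eventually_ge_atTop 1] with m hm
    have hm0 : (0:ℝ) < m := by exact_mod_cast hm
    field_simp
  have := h1.add h2
  rw [add_zero] at this
  apply this.congr'
  filter_upwards [eventually_ge_atTop 1] with m hm
  rw [fstir_eq hm, add_div]

theorem binomial_pmf_exponent (p r : ℝ) (hr0 : 0 < r) (hr1 : r < 1) (hp0 : 0 < p) (hp1 : p < 1) :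
    Filter.Tendsto
      (fun n : ℕ =>
        (1 / (n : ℝ)) *
          Real.log ((n.choose ⌈r * (n : ℝ)⌉₊ : ℝ) * p ^ ⌈r * (n : ℝ)⌉₊ *
            (1 - p) ^ (n - ⌈r * (n : ℝ)⌉₊)))
      Filter.atTop
      (nhds (-(r * Real.log (r / p) + (1 - r) * Real.log ((1 - r) / (1 - p))))) := by
  set k : ℕ → ℕ := fun n => ⌈r * (n : ℝ)⌉₊ with hk
  -- eventual basic facts
  have hev : ∀ᶠ n : ℕ in atTop, 1 ≤ k n ∧ k n < n := by
    have hN : ∀ᶠ n : ℕ in atTop, (1:ℝ) ≤ (1 - r) * n := by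
      have : Tendsto (fun n : ℕ => (1 - r) * (n:ℝ)) atTop atTop :=
        tendsto_natCast_atTop_atTop.const_mul_atTop (by linarith)
      exact this.eventually_ge_atTop 1
    filter_upwards [hN, eventually_ge_atTop 1] with n hn hn1
    have hn0 : (0:ℝ) < n := by exact_mod_cast hn1
    constructor
    · exact Nat.one_le_ceil_iff.mpr (by positivity)
    · have h1 : (k n : ℝ) < r * n + 1 := Nat.ceil_lt_add_one (by positivity)
      have : (k n : ℝ) < n := by nlinarith
      exact_mod_cast this
  -- k n / n → r
  have hs : Tendsto (fun n : ℕ => (k n : ℝ) / n) atTop (nhds r) := by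
    apply tendsto_of_tendsto_of_tendsto_of_le_of_le' (g := fun _ : ℕ => r)
      (h := fun n : ℕ => r + 1 / (n:ℝ)) tendsto_const_nhds
    · simpa using (tendsto_const_nhds (x := r)).add tendsto_one_div_atTop_nhds_zero_nat
    · filter_upwards [eventually_ge_atTop 1] with n hn
      have hn0 : (0:ℝ) < n := by exact_mod_cast hn
      rw [le_div_iff₀ hn0]
      exact Nat.le_ceil _
    · filter_upwards [eventually_ge_atTop 1] with n hn
      have hn0 : (0:ℝ) < n := by exact_mod_cast hn
      rw [div_le_iff₀ hn0]
      have := le_of_lt (Nat.ceil_lt_add_one (show 0 ≤ r * n by positivity))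
      calc (k n : ℝ) ≤ r * n + 1 := this
        _ = (r + 1/n) * n := by field_simp
  -- k n → ∞
  have hktop : Tendsto k atTop atTop := by
    rw [← tendsto_natCast_atTop_iff (R := ℝ)]
    apply tendsto_atTop_mono' _ _ (tendsto_natCast_atTop_atTop.const_mul_atTop hr0)
    filter_upwards with n
    exact Nat.le_ceil _
  -- n - k n → ∞
  have hnktop : Tendsto (fun n => n - k n) atTop atTop := by
    rw [← tendsto_natCast_atTop_iff (R := ℝ)]
    apply tendsto_atTop_mono' _ _ ((tendsto_natCast_atTop_atTop.const_mul_atTop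
      (show (0:ℝ) < (1-r)/2 by linarith)).atTop_add (tendsto_const_nhds (x := (-1:ℝ))))
    filter_upwards [hev, (tendsto_natCast_atTop_atTop.const_mul_atTop
      (show (0:ℝ) < (1-r)/2 by linarith)).eventually_ge_atTop 0] with n hn hn2
    have hle : k n ≤ n := le_of_lt hn.2
    rw [Nat.cast_sub hle]
    have h1 : (k n : ℝ) < r * n + 1 := Nat.ceil_lt_add_one (by positivity)
    nlinarith [hn2]
  -- (n - k n)/n → 1 - r
  have hs' : Tendsto (fun n : ℕ => ((n - k n : ℕ) : ℝ) / n) atTop (nhds (1 - r)) := by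
    have : Tendsto (fun n : ℕ => 1 - (k n : ℝ) / n) atTop (nhds (1 - r)) :=
      tendsto_const_nhds.sub hs
    apply this.congr'
    filter_upwards [hev, eventually_ge_atTop 1] with n hn hn1
    have hn0 : (0:ℝ) < n := by exact_mod_cast hn1
    rw [Nat.cast_sub (le_of_lt hn.2)]
    field_simp
  -- the phi function
  set φ : ℝ → ℝ := fun x => -(x * Real.log x) - (1 - x) * Real.log (1 - x)
    + x * Real.log p + (1 - x) * Real.log (1 - p) with hφ
  have hφcont : ContinuousAt φ r := by
    have h1 : ContinuousAt (fun x : ℝ => x * Real.log x) r :=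
      continuousAt_id.mul (Real.continuousAt_log (ne_of_gt hr0))
    have h2 : ContinuousAt (fun x : ℝ => (1 - x) * Real.log (1 - x)) r := by
      have : ContinuousAt (fun x : ℝ => 1 - x) r := continuousAt_const.sub continuousAt_id
      exact this.mul ((Real.continuousAt_log (by linarith)).comp this)
    exact ((h1.neg.sub h2).add (continuousAt_id.mul continuousAt_const)).add
      ((continuousAt_const.sub continuousAt_id).mul continuousAt_const)
  -- limit pieces
  have l1 : Tendsto (fun n : ℕ => fstir n / n) atTop (nhds 0) := tendsto_fstir_div
  have l2 : Tendsto (fun n : ℕ => fstir (k n) / n) atTop (nhds 0) := by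
    have := (tendsto_fstir_div.comp hktop).mul hs
    rw [zero_mul] at this
    apply this.congr'
    filter_upwards [hev, eventually_ge_atTop 1] with n hn hn1
    have hn0 : ((n:ℝ)) ≠ 0 := by positivity
    have hk0 : ((k n : ℝ)) ≠ 0 := by
      have : 0 < k n := hn.1
      positivity
    field_simp
    simp only [Function.comp_apply]; field_simp
  have l3 : Tendsto (fun n : ℕ => fstir (n - k n) / n) atTop (nhds 0) := by
    have := (tendsto_fstir_div.comp hnktop).mul hs'
    rw [zero_mul] at this
    apply this.congr'
    filter_upwards [hev, hnktop.eventually_ge_atTop 1, eventually_ge_atTop 1]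
      with n hn hnk hn1
    have hn0 : ((n:ℝ)) ≠ 0 := by positivity
    have hk0 : (((n - k n : ℕ) : ℝ)) ≠ 0 := by
      have : 0 < n - k n := hnk
      positivity
    field_simp
    simp only [Function.comp_apply]; field_simp
  have l4 : Tendsto (fun n : ℕ => φ ((k n : ℝ) / n)) atTop (nhds (φ r)) :=
    (hφcont.tendsto).comp hs
  -- assemble
  have lall := ((l1.sub l2).sub l3).add l4
  rw [sub_zero, sub_zero, zero_add] at lall
  have hφr : φ r = -(r * Real.log (r / p) + (1 - r) * Real.log ((1 - r) / (1 - p))) := by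
    rw [hφ]
    simp only
    rw [Real.log_div (ne_of_gt hr0) (ne_of_gt hp0),
      Real.log_div (by linarith : (1:ℝ) - r ≠ 0) (by linarith : (1:ℝ) - p ≠ 0)]
    ring
  rw [← hφr]
  apply lall.congr'
  filter_upwards [hev, eventually_ge_atTop 1] with n hn hn1
  obtain ⟨hk1, hkn⟩ := hn
  have hkle : k n ≤ n := le_of_lt hkn
  have hn0 : (0:ℝ) < n := by exact_mod_cast hn1
  have hk0 : (0:ℝ) < (k n : ℝ) := by exact_mod_cast hk1
  have hnk0 : (0:ℝ) < ((n - k n : ℕ) : ℝ) := by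
    have : 0 < n - k n := Nat.sub_pos_of_lt hkn
    exact_mod_cast this
  have hchoose : (n.choose (k n) : ℝ) * (k n).factorial * (n - k n).factorial
      = n.factorial := by
    exact_mod_cast congrArg (Nat.cast (R := ℝ)) (Nat.choose_mul_factorial_mul_factorial hkle)
  have hchoosepos : (0:ℝ) < (n.choose (k n) : ℝ) := by
    exact_mod_cast Nat.choose_pos hkle
  have hfk : (0:ℝ) < ((k n).factorial : ℝ) := by exact_mod_cast (k n).factorial_pos
  have hfnk : (0:ℝ) < ((n - k n).factorial : ℝ) := by exact_mod_cast (n - k n).factorial_pos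
  have hp' : (0:ℝ) < 1 - p := by linarith
  have hlogchoose : Real.log (n.choose (k n) : ℝ)
      = Real.log (n.factorial : ℝ) - Real.log ((k n).factorial : ℝ)
        - Real.log ((n - k n).factorial : ℝ) := by
    rw [← hchoose, Real.log_mul (by positivity) (ne_of_gt hfnk),
      Real.log_mul (ne_of_gt hchoosepos) (ne_of_gt hfk)]
    ring
  -- main computation
  have hlog : Real.log ((n.choose (k n) : ℝ) * p ^ (k n) * (1 - p) ^ (n - k n))
      = Real.log (n.choose (k n) : ℝ) + (k n : ℝ) * Real.log p
        + ((n - k n : ℕ) : ℝ) * Real.log (1 - p) := by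
    rw [Real.log_mul (by positivity) (by positivity),
      Real.log_mul (ne_of_gt hchoosepos) (by positivity),
      Real.log_pow, Real.log_pow]
  have hcastsub : ((n - k n : ℕ) : ℝ) = (n : ℝ) - (k n : ℝ) := by
    rw [Nat.cast_sub hkle]
  have hfstir : Real.log (n.factorial : ℝ) = fstir n + n * Real.log n - n := by
    unfold fstir; ring
  have hfstirk : Real.log ((k n).factorial : ℝ)
      = fstir (k n) + (k n : ℝ) * Real.log (k n) - (k n : ℝ) := by unfold fstir; ring
  have hfstirnk : Real.log ((n - k n).factorial : ℝ)
      = fstir (n - k n) + ((n - k n : ℕ) : ℝ) * Real.log ((n - k n : ℕ) : ℝ)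
        - ((n - k n : ℕ) : ℝ) := by unfold fstir; ring
  -- φ at k n / n, scaled by n
  have hφval : (n : ℝ) * φ ((k n : ℝ) / n)
      = -((k n : ℝ) * Real.log (k n)) - ((n - k n : ℕ) : ℝ) * Real.log ((n - k n : ℕ) : ℝ)
        + (n : ℝ) * Real.log n + (k n : ℝ) * Real.log p
        + ((n - k n : ℕ) : ℝ) * Real.log (1 - p) := by
    rw [hφ]
    simp only
    have e1 : Real.log ((k n : ℝ) / n) = Real.log (k n) - Real.log n :=
      Real.log_div (ne_of_gt hk0) (ne_of_gt hn0)
    have e2 : (1 : ℝ) - (k n : ℝ) / n = ((n - k n : ℕ) : ℝ) / n := by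
      rw [hcastsub]; field_simp
    rw [e2]
    have e3 : Real.log (((n - k n : ℕ) : ℝ) / n) = Real.log ((n - k n : ℕ) : ℝ) - Real.log n :=
      Real.log_div (ne_of_gt hnk0) (ne_of_gt hn0)
    rw [e1, e3]
    have e4 : ((n - k n : ℕ) : ℝ) + (k n : ℝ) = (n : ℝ) := by rw [hcastsub]; ring
    field_simp
    linear_combination (Real.log n) * e4
  -- final equality
  have key : Real.log ((n.choose (k n) : ℝ) * p ^ (k n) * (1 - p) ^ (n - k n))
      = fstir n - fstir (k n) - fstir (n - k n) + (n : ℝ) * φ ((k n : ℝ) / n) := by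
    rw [hlog, hlogchoose, hfstir, hfstirk, hfstirnk, hφval]
    have e4 : ((n - k n : ℕ) : ℝ) = (n : ℝ) - (k n : ℝ) := hcastsub
    rw [e4]; ring
  have gen : ∀ x A B C D : ℝ, x ≠ 0 → (1/x)*(A - B - C + x*D) = A/x - B/x - C/x + D := by
    intros x A B C D hx; field_simp
  have main : (1 / (n:ℝ)) * Real.log ((n.choose (k n) : ℝ) * p ^ (k n) * (1 - p) ^ (n - k n))
      = fstir n / n - fstir (k n) / n - fstir (n - k n) / n + φ ((k n : ℝ) / n) := by
    rw [key]
    exact gen _ _ _ _ _ (ne_of_gt hn0)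
  exact main.symm
end

section
/- Let 0 < p < 1 and define τ1 = (1-(1-p)^3)/3, λ1 = -log(1-p), τ2 = 2p(2-p)/3, λ2 = -(2/3)·log(1-p), τ3 = (3p-p^3)/3, λ3 = -(1/3)·log((1-p)^2·(1+p)). Then (λ1-λ2)·(τ1-τ3) ≥ (λ1-λ3)·(τ1-τ2). -/
theorem slope_comparison_d3 (p : ℝ) (hp0 : 0 < p) (hp1 : p < 1) :
    ((-Real.log (1 - p)) - (-(2 / 3) * Real.log (1 - p))) *
        ((1 - (1 - p) ^ 3) / 3 - (3 * p - p ^ 3) / 3) ≥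
      ((-Real.log (1 - p)) - (-(1 / 3) * Real.log ((1 - p) ^ 2 * (1 + p)))) *
        ((1 - (1 - p) ^ 3) / 3 - 2 * p * (2 - p) / 3) := by
  have hq : (0:ℝ) < 1 - p := by linarith
  have hsplit : Real.log ((1 - p) ^ 2 * (1 + p)) =
      2 * Real.log (1 - p) + Real.log (1 + p) := by
    rw [Real.log_mul (by positivity) (by positivity), Real.log_pow]
    push_cast; ring
  rw [hsplit]
  have hL : Real.log (1 - p) ≤ 0 := Real.log_nonpos (by linarith) (by linarith)
  have hM : 0 ≤ Real.log (1 + p) := Real.log_nonneg (by linarith)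
  nlinarith [mul_nonneg (neg_nonneg.mpr hL) (sq_nonneg (1 - p)),
    mul_nonneg hM (mul_nonneg hp0.le (by nlinarith : (0:ℝ) ≤ 1 + p - p^2)),
    sq_nonneg p, hp0.le]
end
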